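/- Let Q = ⟨X,A,S,τ⟩ and Q' = ⟨X',A',S',τ'⟩ be QBAFs for explananda e and e' respectively, let a ∈ X ∩ X', and let Y = {a} ∪ {b ∈ X : paths(b,a) ≠ ∅ in Q}. Suppose {a} ∪ {b ∈ X' : paths(b,a) ≠ ∅ in Q'} = Y, τ(b) = τ'(b) for all b ∈ Y, A ∩ (Y×Y) = A' ∩ (Y×Y) and S ∩ (Y×Y) = S' ∩ (Y×Y). Then under the DF-QuAD evaluation, σ(Q,a) = σ(Q',a); that is, the DF-QuAD evaluation of an argument depends only on the sub-QBAF of arguments having a path to it. -/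
import Mathlib


universe u v

variable {U : Type u} {Ag : Type v}

/-- A bipolar argumentation framework (BAF): arguments `X`, attacks `Att`, supports `Supp`. -/
structure BAF (U : Type u) where
  X : Finset U
  Att : Finset (U × U)
  Supp : Finset (U × U)

namespace BAF

variable [DecidableEq U]

/-- The edges of a BAF: attacks together with supports. -/
def edges (B : BAF U) : Finset (U × U) := B.Att ∪ B.Supp

/-- A path from `a` to `b`: a nonempty list of consecutive edges `(c₀,c₁),…,(c_{n−1},cₙ)`
with `c₀ = a` and `cₙ = b`. -/
inductive IsPath (B : BAF U) : U → U → List (U × U) → Prop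
  | single {a b : U} (h : (a, b) ∈ B.edges) : IsPath B a b [(a, b)]
  | cons {a c b : U} {p : List (U × U)} (h : (a, c) ∈ B.edges)
      (hp : IsPath B c b p) : IsPath B a b ((a, c) :: p)

/-- `B ⊑ B'` for BAFs (componentwise inclusion). -/
def Sub (B B' : BAF U) : Prop := B.X ⊆ B'.X ∧ B.Att ⊆ B'.Att ∧ B.Supp ⊆ B'.Supp

/-- `B` is a BAF for the explanandum `e`. -/
structure IsFor (B : BAF U) (e : U) : Prop where
  e_mem : e ∈ B.X
  att_mem : ∀ p ∈ B.Att, p.1 ∈ B.X ∧ p.2 ∈ B.X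
  supp_mem : ∀ p ∈ B.Supp, p.1 ∈ B.X ∧ p.2 ∈ B.X
  disj : ∀ p : U × U, ¬(p ∈ B.Att ∧ p ∈ B.Supp)
  no_out : ∀ a : U, (e, a) ∉ B.edges
  reach : ∀ a ∈ B.X, a ≠ e → ∃ p, B.IsPath a e p
  acyclic : ∀ (a : U) (p : List (U × U)), ¬ B.IsPath a a p

/-- The number of attack edges occurring in a path. -/
def attCount (B : BAF U) (p : List (U × U)) : ℕ :=
  (p.filter (fun q => q ∈ B.Att)).length

/-- Pro arguments: arguments with a path to `e` containing an even number of attacks. -/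
def pro (B : BAF U) (e : U) : Set U :=
  {a | a ∈ B.X ∧ ∃ p, B.IsPath a e p ∧ Even (B.attCount p)}

/-- Con arguments: arguments with a path to `e` containing an odd number of attacks. -/
def con (B : BAF U) (e : U) : Set U :=
  {a | a ∈ B.X ∧ ∃ p, B.IsPath a e p ∧ Odd (B.attCount p)}

/-- The shortest path from `x` to `e` is strictly shorter than every path from `y` to `e`. -/
def SPlt (B : BAF U) (e x y : U) : Prop :=
  ∃ p, B.IsPath x e p ∧ ∀ q, B.IsPath y e q → p.length < q.length

end BAF

/-- A quantitative bipolar argumentation framework (QBAF), with base scores `bs`. -/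
structure QBAF (U : Type u) where
  X : Finset U
  Att : Finset (U × U)
  Supp : Finset (U × U)
  bs : U → ℝ

namespace QBAF

variable [DecidableEq U]

def toBAF (Q : QBAF U) : BAF U := ⟨Q.X, Q.Att, Q.Supp⟩

def edges (Q : QBAF U) : Finset (U × U) := Q.Att ∪ Q.Supp

/-- `Q` is a QBAF for `e`: its underlying BAF is for `e` and base scores lie in `[0,1]`. -/
def IsFor (Q : QBAF U) (e : U) : Prop :=
  Q.toBAF.IsFor e ∧ ∀ a ∈ Q.X, Q.bs a ∈ Set.Icc (0 : ℝ) 1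

/-- `Q ⊑ Q'` for QBAFs. -/
def Sub (Q Q' : QBAF U) : Prop :=
  Q.X ⊆ Q'.X ∧ Q.Att ⊆ Q'.Att ∧ Q.Supp ⊆ Q'.Supp ∧ ∀ a ∈ Q.X, Q'.bs a = Q.bs a

def attackers (Q : QBAF U) (a : U) : Finset U :=
  (Q.Att.filter (fun p => p.2 = a)).image Prod.fst

def supporters (Q : QBAF U) (a : U) : Finset U :=
  (Q.Supp.filter (fun p => p.2 = a)).image Prod.fst

end QBAF

/-- The DF-QuAD aggregation function on finite lists of values. -/
noncomputable def dfAgg : List ℝ → ℝ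
  | [] => 0
  | v :: vs => v + dfAgg vs - v * dfAgg vs

/-- The DF-QuAD combination function. -/
noncomputable def dfComb (v0 vm vp : ℝ) : ℝ :=
  if vp ≤ vm then v0 - v0 * |vp - vm| else v0 + (1 - v0) * |vp - vm|

/-- `f` is the DF-QuAD evaluation of the QBAF `Q`. -/
def IsDFQuADEval [DecidableEq U] (Q : QBAF U) (f : U → ℝ) : Prop :=
  ∀ a ∈ Q.X,
    f a = dfComb (Q.bs a) (dfAgg ((Q.attackers a).toList.map f))
        (dfAgg ((Q.supporters a).toList.map f))

/-- The stance determined by an evaluation value in `[0,1]`: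
`−` (coded `-1`) on `[0,0.5)`, `0` on `{0.5}`, `+` (coded `1`) on `(0.5,1]`. -/
noncomputable def stanceVal (v : ℝ) : ℤ :=
  if v < 1 / 2 then -1 else if v = 1 / 2 then 0 else 1

/-- An argumentative exchange (AX): exchange BAFs `B`, private QBAFs `Q`,
and a contributor mapping `contrib`. -/
structure AX (U : Type u) (Ag : Type v) where
  n : ℕ
  B : ℕ → BAF U
  Q : Ag → ℕ → QBAF U
  contrib : U × U → Ag × ℕ

namespace AX

variable [DecidableEq U]

/-- `E` is an AX for the explanandum `e` amongst the agents `Ag`. -/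
structure IsAX (E : AX U Ag) (e : U) : Prop where
  n_pos : 0 < E.n
  agents : ∃ α β : Ag, α ≠ β
  B_for : ∀ t ≤ E.n, (E.B t).IsFor e
  B0_X : (E.B 0).X = {e}
  B0_Att : (E.B 0).Att = ∅
  B0_Supp : (E.B 0).Supp = ∅
  B_mono : ∀ t < E.n, (E.B t).Sub (E.B (t + 1))
  Q_for : ∀ (α : Ag), ∀ t ≤ E.n, (E.Q α t).IsFor e
  Q_mono : ∀ (α : Ag), ∀ t < E.n, (E.Q α t).Sub (E.Q α (t + 1))
  Q_diff_X : ∀ (α : Ag), ∀ t < E.n,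
    (E.Q α (t + 1)).X \ (E.Q α t).X ⊆ (E.B (t + 1)).X \ (E.B t).X
  Q_diff_Att : ∀ (α : Ag), ∀ t < E.n,
    (E.Q α (t + 1)).Att \ (E.Q α t).Att ⊆ (E.B (t + 1)).Att \ (E.B t).Att
  Q_diff_Supp : ∀ (α : Ag), ∀ t < E.n,
    (E.Q α (t + 1)).Supp \ (E.Q α t).Supp ⊆ (E.B (t + 1)).Supp \ (E.B t).Supp
  learn_X : ∀ (α : Ag), ∀ t < E.n,
    (E.B (t + 1)).X \ (E.B t).X ⊆ (E.Q α (t + 1)).X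
  learn_Att : ∀ (α : Ag), ∀ t < E.n,
    (E.B (t + 1)).Att \ (E.B t).Att ⊆ (E.Q α (t + 1)).Att
  learn_Supp : ∀ (α : Ag), ∀ t < E.n,
    (E.B (t + 1)).Supp \ (E.B t).Supp ⊆ (E.Q α (t + 1)).Supp
  contrib_pos : ∀ p ∈ (E.B E.n).edges, 0 < (E.contrib p).2
  contrib_le : ∀ p ∈ (E.B E.n).edges, (E.contrib p).2 ≤ E.n
  contrib_mem : ∀ p ∈ (E.B E.n).edges, p ∈ (E.B (E.contrib p).2).edges
  contrib_new : ∀ p ∈ (E.B E.n).edges, p ∉ (E.B ((E.contrib p).2 - 1)).edges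

/-- The set of edges contributed by agent `α` at timestep `t`. -/
def Cset [DecidableEq Ag] (E : AX U Ag) (α : Ag) (t : ℕ) : Finset (U × U) :=
  (E.B E.n).edges.filter (fun p => E.contrib p = (α, t))

end AX

/-- All agents hold the same stance at timestep `t`. -/
def ResolvedAt (st : Ag → ℕ → ℤ) (t : ℕ) : Prop := ∀ α β : Ag, st α t = st β t

/-- The AX (with an initial conflict) is resolved. -/
def Resolved (E : AX U Ag) (st : Ag → ℕ → ℤ) : Prop :=
  ¬ ResolvedAt st 0 ∧ ResolvedAt st E.n ∧ ∀ t, 0 < t → t < E.n → ¬ ResolvedAt st t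

/-- The AX (with an initial conflict) is unresolved. -/
def Unresolved (E : AX U Ag) (st : Ag → ℕ → ℤ) : Prop :=
  ¬ ResolvedAt st 0 ∧ ∀ t, 0 < t → t ≤ E.n → ¬ ResolvedAt st t

/-- Agent `α` is arguing for `e` at `t`: some agent has a strictly smaller stance. -/
def ArguingFor (st : Ag → ℕ → ℤ) (α : Ag) (t : ℕ) : Prop := ∃ β, st β t < st α t

/-- Agent `α` is arguing against `e` at `t`: some agent has a strictly greater stance. -/
def ArguingAgainst (st : Ag → ℕ → ℤ) (α : Ag) (t : ℕ) : Prop := ∃ β, st α t < st β t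

section Behaviours

variable [DecidableEq U]

/-- Condition (1) of the greedy behaviour: `(a,b)` is a pair of the private QBAF `Qp`
not yet in the exchange BAF `Bp`, in line with the agent's state (`forE`). -/
def GreedyEligible (Qp : QBAF U) (Bp : BAF U) (e : U) (forE : Bool) (a b : U) : Prop :=
  (a, b) ∈ Qp.edges ∧ (a, b) ∉ Bp.edges ∧
    (if forE then
        ((a, b) ∈ Qp.Supp ∧ (b ∈ Bp.pro e ∨ b = e)) ∨ ((a, b) ∈ Qp.Att ∧ b ∈ Bp.con e)
      else
        ((a, b) ∈ Qp.Supp ∧ b ∈ Bp.con e) ∨ ((a, b) ∈ Qp.Att ∧ (b ∈ Bp.pro e ∨ b = e)))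

/-- A greedy choice: eligible, of maximal strength (2), and closest to `e` among
equally strong eligible pairs (3). -/
def GreedyChoice (Qp : QBAF U) (Bp : BAF U) (σα : U → ℝ) (e : U) (forE : Bool)
    (a b : U) : Prop :=
  GreedyEligible Qp Bp e forE a b ∧
    (∀ a' b' : U, GreedyEligible Qp Bp e forE a' b' → σα a' ≤ σα a) ∧
    (∀ a'' b'' : U, GreedyEligible Qp Bp e forE a'' b'' → σα a'' = σα a →
      ¬ BAF.SPlt Qp.toBAF e a'' a)

/-- A contribution set is a correct greedy contribution: empty or a single greedy choice. -/
def GreedyOK (Qp : QBAF U) (Bp : BAF U) (σα : U → ℝ) (e : U) (forE : Bool)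
    (C : Finset (U × U)) : Prop :=
  C = ∅ ∨ ∃ a b : U, C = {(a, b)} ∧ GreedyChoice Qp Bp σα e forE a b

/-- Agent `α` exhibits greedy behaviour throughout the AX `E`. -/
def GreedyBehaviour [DecidableEq Ag] (E : AX U Ag) (e : U)
    (ev : Ag → QBAF U → U → ℝ) (st : Ag → ℕ → ℤ) (α : Ag) : Prop :=
  ∀ t, 0 < t → t ≤ E.n →
    E.Cset α t = ∅ ∨
      ∃ a b : U, E.Cset α t = {(a, b)} ∧
        (ArguingFor st α (t - 1) →
          GreedyChoice (E.Q α (t - 1)) (E.B (t - 1)) (ev α (E.Q α (t - 1))) e true a b) ∧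
        (ArguingAgainst st α (t - 1) →
          GreedyChoice (E.Q α (t - 1)) (E.B (t - 1)) (ev α (E.Q α (t - 1))) e false a b)

/-- The inner condition of the shallow behaviour for a contribution set `C`. -/
def ShallowInner (Qp : QBAF U) (Bp : BAF U) (σα : U → ℝ) (e : U) (forE : Bool)
    (C : Finset (U × U)) (max : ℕ) : Prop :=
  C.card ≤ max ∧ (∀ p ∈ C, p.2 = e) ∧
    (if forE then
        C ⊆ Qp.Supp \ Bp.Supp ∧
          ∀ p ∈ C, ∀ b : U, (b, e) ∈ Qp.Supp → (b, e) ∉ Bp.Supp ∪ C → σα b ≤ σα p.1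
      else
        C ⊆ Qp.Att \ Bp.Att ∧
          ∀ p ∈ C, ∀ b : U, (b, e) ∈ Qp.Att → (b, e) ∉ Bp.Att ∪ C → σα b ≤ σα p.1)

/-- A contribution set is a correct shallow contribution: it satisfies the inner condition
and is of maximal cardinality doing so. -/
def ShallowOK (Qp : QBAF U) (Bp : BAF U) (σα : U → ℝ) (e : U) (forE : Bool)
    (C : Finset (U × U)) (max : ℕ) : Prop :=
  ShallowInner Qp Bp σα e forE C max ∧
    ∀ C' : Finset (U × U), ShallowInner Qp Bp σα e forE C' max → C'.card ≤ C.card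

/-- A private view of the exchange BAF `Bp` by an agent with private QBAF `Qα`. -/
def PrivateView (Bp : BAF U) (Qα : QBAF U) (V : QBAF U) : Prop :=
  Bp.Sub V.toBAF ∧ V.Sub Qα

/-- `ε` is the perceived effect on `e` of the pair `(a,b)` for an agent with private QBAF
`Qp` given the exchange BAF `Bp` (under the DF-QuAD evaluation). -/
def PerceivedEffect (Qp : QBAF U) (Bp : BAF U) (e a b : U) (ε : ℝ) : Prop :=
  ∃ (V V' : QBAF U) (f f' : U → ℝ),
    PrivateView Bp Qp V ∧
    V'.X = insert a V.X ∧
    V'.Att = (V'.X ×ˢ V'.X) ∩ Qp.Att ∧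
    V'.Supp = (V'.X ×ˢ V'.X) ∩ Qp.Supp ∧
    (∀ x ∈ V'.X, V'.bs x = Qp.bs x) ∧
    IsDFQuADEval V f ∧ IsDFQuADEval V' f' ∧
    ε = f' e - f e

/-- A pair eligible for the counterfactual behaviour. -/
def CFEligible (Qp : QBAF U) (Bp : BAF U) (a b : U) : Prop :=
  (a, b) ∈ Qp.edges ∧ (a, b) ∉ Bp.edges ∧ a ∈ Qp.X ∧ a ∉ Bp.X ∧ b ∈ Bp.X

/-- Agent `α` exhibits counterfactual behaviour throughout the AX `E`,
where `εf α t a b` is the perceived effect of `(a,b)` at timestep `t`. -/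
def CFBehaviour [DecidableEq Ag] (E : AX U Ag) (st : Ag → ℕ → ℤ)
    (εf : Ag → ℕ → U → U → ℝ) (α : Ag) : Prop :=
  ∀ t, 0 < t → t ≤ E.n →
    E.Cset α t = ∅ ∨
      ∃ a b : U, E.Cset α t = {(a, b)} ∧
        CFEligible (E.Q α (t - 1)) (E.B (t - 1)) a b ∧
        (ArguingFor st α (t - 1) →
          0 < εf α t a b ∧
            ∀ a' b' : U, CFEligible (E.Q α (t - 1)) (E.B (t - 1)) a' b' →
              εf α t a' b' ≤ εf α t a b) ∧
        (ArguingAgainst st α (t - 1) →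
          εf α t a b < 0 ∧
            ∀ a' b' : U, CFEligible (E.Q α (t - 1)) (E.B (t - 1)) a' b' →
              εf α t a b ≤ εf α t a' b')

end Behaviours

lemma BAF.IsPath.append' [DecidableEq U] {B : BAF U} {d c b : U} {p : List (U × U)}
    (hp : B.IsPath d c p) (h : (c, b) ∈ B.edges) : B.IsPath d b (p ++ [(c, b)]) := by
  induction hp with
  | single h' => exact .cons h' (.single h)
  | @cons x y z q h' hp ih => exact .cons h' (ih h)

lemma QBAF.mem_attackers [DecidableEq U] (Q : QBAF U) (c b : U) :
    c ∈ Q.attackers b ↔ (c, b) ∈ Q.Att := by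
  constructor
  · intro h
    obtain ⟨p, hp, rfl⟩ := Finset.mem_image.mp h
    obtain ⟨hp1, hp2⟩ := Finset.mem_filter.mp hp
    have : p = (p.1, b) := by rw [← hp2]
    exact this ▸ hp1
  · intro h
    exact Finset.mem_image.mpr ⟨(c, b), Finset.mem_filter.mpr ⟨h, rfl⟩, rfl⟩

lemma QBAF.mem_supporters [DecidableEq U] (Q : QBAF U) (c b : U) :
    c ∈ Q.supporters b ↔ (c, b) ∈ Q.Supp := by
  constructor
  · intro h
    obtain ⟨p, hp, rfl⟩ := Finset.mem_image.mp h
    obtain ⟨hp1, hp2⟩ := Finset.mem_filter.mp hp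
    have : p = (p.1, b) := by rw [← hp2]
    exact this ▸ hp1
  · intro h
    exact Finset.mem_image.mpr ⟨(c, b), Finset.mem_filter.mpr ⟨h, rfl⟩, rfl⟩

/-- the DF-QuAD evaluation of an argument depends only on the sub-QBAF of
arguments having a path to it. -/
theorem statement19 {U : Type u} [DecidableEq U] (e e' : U) (Q Q' : QBAF U)
    (hQ : Q.IsFor e) (hQ' : Q'.IsFor e')
    (a : U) (haQ : a ∈ Q.X) (haQ' : a ∈ Q'.X)
    (Y : Set U)
    (hY : Y = {a} ∪ {b : U | b ∈ Q.X ∧ ∃ p, Q.toBAF.IsPath b a p})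
    (hY' : ({a} ∪ {b : U | b ∈ Q'.X ∧ ∃ p, Q'.toBAF.IsPath b a p}) = Y)
    (hbs : ∀ b ∈ Y, Q.bs b = Q'.bs b)
    (hA : (↑Q.Att : Set (U × U)) ∩ (Y ×ˢ Y) = (↑Q'.Att : Set (U × U)) ∩ (Y ×ˢ Y))
    (hS : (↑Q.Supp : Set (U × U)) ∩ (Y ×ˢ Y) = (↑Q'.Supp : Set (U × U)) ∩ (Y ×ˢ Y))
    (f f' : U → ℝ) (hf : IsDFQuADEval Q f) (hf' : IsDFQuADEval Q' f') :
    f a = f' a := by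
  classical
  have haY : a ∈ Y := by rw [hY]; exact Set.mem_union_left _ rfl
  have hbYX : ∀ b ∈ Y, b ∈ Q.X := by
    intro b hb; rw [hY] at hb
    rcases hb with hb | hb
    · exact (Set.mem_singleton_iff.mp hb) ▸ haQ
    · exact hb.1
  have hbYX' : ∀ b ∈ Y, b ∈ Q'.X := by
    intro b hb; rw [← hY'] at hb
    rcases hb with hb | hb
    · exact (Set.mem_singleton_iff.mp hb) ▸ haQ'
    · exact hb.1
  have memY : ∀ b ∈ Y, ∀ c, (c, b) ∈ Q.toBAF.edges → c ∈ Y := by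
    intro b hb c hc
    have hcX : c ∈ Q.X := by
      rcases Finset.mem_union.mp hc with h | h
      · exact (hQ.1.att_mem _ h).1
      · exact (hQ.1.supp_mem _ h).1
    by_cases hba : b = a
    · rw [hY]; exact Set.mem_union_right _ ⟨hcX, _, .single (hba ▸ hc)⟩
    · rw [hY] at hb ⊢
      rcases hb with hb | hb
      · exact absurd (Set.mem_singleton_iff.mp hb) hba
      · obtain ⟨_, p, hp⟩ := hb
        exact Set.mem_union_right _ ⟨hcX, _, .cons hc hp⟩
  have memY' : ∀ b ∈ Y, ∀ c, (c, b) ∈ Q'.toBAF.edges → c ∈ Y := by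
    intro b hb c hc
    have hcX : c ∈ Q'.X := by
      rcases Finset.mem_union.mp hc with h | h
      · exact (hQ'.1.att_mem _ h).1
      · exact (hQ'.1.supp_mem _ h).1
    by_cases hba : b = a
    · rw [← hY']; exact Set.mem_union_right _ ⟨hcX, _, .single (hba ▸ hc)⟩
    · rw [← hY'] at hb ⊢
      rcases hb with hb | hb
      · exact absurd (Set.mem_singleton_iff.mp hb) hba
      · obtain ⟨_, p, hp⟩ := hb
        exact Set.mem_union_right _ ⟨hcX, _, .cons hc hp⟩
  have hattEq : ∀ b ∈ Y, Q.attackers b = Q'.attackers b := by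
    intro b hb; ext c
    rw [QBAF.mem_attackers, QBAF.mem_attackers]
    constructor
    · intro h
      have hcY := memY b hb c (Finset.mem_union_left _ h)
      have := (Set.ext_iff.mp hA (c, b)).mp ⟨by exact_mod_cast h, hcY, hb⟩
      exact_mod_cast this.1
    · intro h
      have hcY := memY' b hb c (Finset.mem_union_left _ h)
      have := (Set.ext_iff.mp hA (c, b)).mpr ⟨by exact_mod_cast h, hcY, hb⟩
      exact_mod_cast this.1
  have hsuppEq : ∀ b ∈ Y, Q.supporters b = Q'.supporters b := by
    intro b hb; ext c
    rw [QBAF.mem_supporters, QBAF.mem_supporters]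
    constructor
    · intro h
      have hcY := memY b hb c (Finset.mem_union_right _ h)
      have := (Set.ext_iff.mp hS (c, b)).mp ⟨by exact_mod_cast h, hcY, hb⟩
      exact_mod_cast this.1
    · intro h
      have hcY := memY' b hb c (Finset.mem_union_right _ h)
      have := (Set.ext_iff.mp hS (c, b)).mpr ⟨by exact_mod_cast h, hcY, hb⟩
      exact_mod_cast this.1
  set m : U → ℕ := fun b => (Q.X.filter (fun c => ∃ p, Q.toBAF.IsPath c b p)).card with hm
  have mdec : ∀ b c : U, (c, b) ∈ Q.toBAF.edges → m c < m b := by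
    intro b c hc
    have hcX : c ∈ Q.X := by
      rcases Finset.mem_union.mp hc with h | h
      · exact (hQ.1.att_mem _ h).1
      · exact (hQ.1.supp_mem _ h).1
    apply Finset.card_lt_card
    rw [Finset.ssubset_def]
    constructor
    · intro d hd
      obtain ⟨hdX, p, hp⟩ := Finset.mem_filter.mp hd
      exact Finset.mem_filter.mpr ⟨hdX, _, hp.append' hc⟩
    · intro hsub
      have hcmem : c ∈ Q.X.filter (fun d => ∃ p, Q.toBAF.IsPath d b p) :=
        Finset.mem_filter.mpr ⟨hcX, _, .single hc⟩
      obtain ⟨_, p, hp⟩ := Finset.mem_filter.mp (hsub hcmem)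
      exact hQ.1.acyclic c p hp
  have main : ∀ n, ∀ b ∈ Y, m b < n → f b = f' b := by
    intro n
    induction n with
    | zero => intro b _ h; omega
    | succ n ih =>
      intro b hb hmb
      have hl1 : ((Q.attackers b).toList.map f) = ((Q.attackers b).toList.map f') := by
        apply List.map_congr_left
        intro c hc
        have hcA : (c, b) ∈ Q.Att := (Q.mem_attackers c b).mp (Finset.mem_toList.mp hc)
        have hce : (c, b) ∈ Q.toBAF.edges := Finset.mem_union_left _ hcA
        exact ih c (memY b hb c hce) (by have := mdec b c hce; omega)
      have hl2 : ((Q.supporters b).toList.map f) = ((Q.supporters b).toList.map f') := by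
        apply List.map_congr_left
        intro c hc
        have hcS : (c, b) ∈ Q.Supp := (Q.mem_supporters c b).mp (Finset.mem_toList.mp hc)
        have hce : (c, b) ∈ Q.toBAF.edges := Finset.mem_union_right _ hcS
        exact ih c (memY b hb c hce) (by have := mdec b c hce; omega)
      rw [hf b (hbYX b hb), hf' b (hbYX' b hb), ← hattEq b hb, ← hsuppEq b hb,
        ← hbs b hb, hl1, hl2]
  exact main (m a + 1) a haY (Nat.lt_succ_self _)
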